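/- Let Re β ≥ 0 and let E_β denote the inverse of C_{id-1} - Id on z^{-β-2}ℂ[[z^{-1}]]. Then the formal Borel counterpart of E_β is multiplication by 1/(e^ζ - 1): if B φ̃ = φ̂ ∈ ζ^{β+1}ℂ[[ζ]], then B(E_β φ̃)(ζ) = φ̂(ζ)/(e^ζ - 1) ∈ ζ^β ℂ[[ζ]]. -/

import Mathlib

open Finset PowerSeries

/-- Coefficient of `w^k` in the binomial series `(1-w)^{-n-β-1}`. -/
noncomputable def binomCoeff (β : ℂ) (n k : ℕ) : ℂ :=
  (∏ j ∈ Finset.range k, ((n : ℂ) + β + 1 + (j : ℂ))) / (k.factorial : ℂ)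

/-- The operator `C_{id-1} - Id` on coefficients: a series `z^{-β-1}∑ d_n z^{-n}`
is sent to `z^{-β-2}∑ (Tmap β d)_m z^{-m}`. -/
noncomputable def Tmap (β : ℂ) (d : ℕ → ℂ) : ℕ → ℂ :=
  fun m => ∑ n ∈ Finset.range (m + 1), d n * binomCoeff β n (m + 1 - n)

lemma gamma_shift (z : ℂ) (hz : 0 < z.re) (k : ℕ) :
    Complex.Gamma (z + k) = Complex.Gamma z * ∏ j ∈ Finset.range k, (z + j) := by
  induction k with
  | zero => simp
  | succ k ih =>
      have hne : z + (k : ℂ) ≠ 0 := by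
        intro h
        have : (z + (k : ℂ)).re = 0 := by rw [h]; simp
        simp only [Complex.add_re, Complex.natCast_re] at this
        have : (0:ℝ) ≤ (k:ℝ) := Nat.cast_nonneg k
        linarith [Nat.cast_nonneg (α := ℝ) k,
          show z.re + (k:ℝ) = 0 by simpa using ‹(z + (k : ℂ)).re = 0›]
      have : Complex.Gamma (z + (k + 1 : ℕ)) = (z + k) * Complex.Gamma (z + k) := by
        rw [show z + ((k + 1 : ℕ) : ℂ) = (z + k) + 1 by push_cast; ring]
        exact Complex.Gamma_add_one _ hne
      rw [this, ih, Finset.prod_range_succ]; ring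

/-- if `ψ̃ = E_β φ̃`, i.e. `(C_{id-1} - Id) ψ̃ = φ̃` with
`φ̃ = z^{-β-2}∑ c_n z^{-n}` and `ψ̃ = z^{-β-1}∑ d_n z^{-n}`, then the formal Borel
transform of `ψ̃` is `φ̂(ζ)/(e^ζ-1)`: writing `B φ̃ = ζ^{β+1} F(ζ)` and
`B ψ̃ = ζ^β G(ζ)`, one has `(e^ζ - 1)·G = ζ·F` as formal power series. -/
theorem borel_counterpart_of_Ebeta (β : ℂ) (hβ : 0 ≤ β.re) (c d : ℕ → ℂ)
    (h : Tmap β d = c) :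
    (PowerSeries.exp ℂ - 1) *
        PowerSeries.mk (fun n => d n / Complex.Gamma ((n : ℂ) + β + 1))
      = PowerSeries.X *
        PowerSeries.mk (fun n => c n / Complex.Gamma ((n : ℂ) + β + 2)) := by
  subst h
  ext m
  cases m with
  | zero =>
      simp [PowerSeries.coeff_mul, Finset.Nat.antidiagonal_zero, PowerSeries.coeff_exp]
  | succ m =>
      rw [PowerSeries.coeff_succ_X_mul, PowerSeries.coeff_mul,
        Finset.Nat.sum_antidiagonal_eq_sum_range_succ_mk]
      -- remove the i = 0 term, then reindex i ↦ m + 1 - n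
      have hsum : ∀ i ∈ Finset.range (m + 2),
          (PowerSeries.coeff i) (PowerSeries.exp ℂ - 1) *
            (PowerSeries.coeff (m + 1 - i))
              (PowerSeries.mk fun n => d n / Complex.Gamma ((n : ℂ) + β + 1))
          = (if i = 0 then 0 else (1 / (i.factorial : ℂ))) *
              (d (m + 1 - i) / Complex.Gamma (((m + 1 - i : ℕ) : ℂ) + β + 1)) := by
        intro i _
        rcases eq_or_ne i 0 with rfl | hi
        · simp [PowerSeries.coeff_exp]
        · simp [PowerSeries.coeff_exp, hi, PowerSeries.coeff_one]
      rw [Finset.sum_congr rfl hsum, Finset.sum_range_succ']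
      simp only [if_true, zero_mul, add_zero, Nat.succ_sub_succ_eq_sub, Nat.succ_ne_zero, ite_false]
      rw [← Finset.sum_range_reflect]
      simp only [Nat.add_sub_cancel]
      rw [PowerSeries.coeff_mk, Tmap, Finset.sum_div]
      refine Finset.sum_congr rfl fun n hn => ?_
      have hn' : n ≤ m := Nat.lt_succ_iff.mp (Finset.mem_range.mp hn)
      -- simplify indices
      have h1 : m - (m - n) = n := Nat.sub_sub_self hn'
      have h2 : m - n + 1 = m + 1 - n := by omega
      rw [h1, h2]
      -- Gamma identity
      have hz : (0:ℝ) < ((n:ℂ) + β + 1).re := by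
        simp only [Complex.add_re, Complex.natCast_re, Complex.one_re]
        have := Nat.cast_nonneg (α := ℝ) n
        linarith
      have hgam := gamma_shift ((n:ℂ) + β + 1) hz (m + 1 - n)
      have hcast : (n:ℂ) + β + 1 + ((m + 1 - n : ℕ) : ℂ) = (m:ℂ) + β + 2 := by
        have : ((m + 1 - n : ℕ) : ℂ) = (m:ℂ) + 1 - (n:ℂ) := by
          push_cast [Nat.cast_sub (by omega : n ≤ m + 1)]; ring
        rw [this]; ring
      rw [hcast] at hgam
      rw [binomCoeff, hgam]
      have hΓ : Complex.Gamma ((n:ℂ) + β + 1) ≠ 0 := Complex.Gamma_ne_zero_of_re_pos hz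
      have hfac : (((m + 1 - n).factorial : ℂ)) ≠ 0 := by
        exact_mod_cast Nat.factorial_ne_zero _
      have hP : (∏ j ∈ Finset.range (m + 1 - n), ((n:ℂ) + β + 1 + (j:ℂ))) ≠ 0 := by
        refine Finset.prod_ne_zero_iff.mpr fun j _ => ?_
        intro hj
        have : ((n:ℂ) + β + 1 + (j:ℂ)).re = 0 := by rw [hj]; simp
        simp only [Complex.add_re, Complex.natCast_re, Complex.one_re] at this
        have := Nat.cast_nonneg (α := ℝ) n
        have := Nat.cast_nonneg (α := ℝ) j
        linarith
      field_simp
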